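/- Let s = (s_1,…,s_ℓ) ∈ ℤ^ℓ with s_1 + s_2 + ⋯ + s_ℓ = 0, and set γ = Σ_{p=1}^{ℓ−1}(s_{p+1} − s_p)·(ω_p − ω_0) ∈ V. Then ⟨γ, γ⟩ = Σ_{p=1}^{ℓ} s_p². -/

import Mathlib

lemma tele_aux (f : ℕ → ℚ) (k n : ℕ) (h : k ≤ n) :
    ∑ p ∈ Finset.Ico k n, (f (p + 1) - f p) = f n - f k := by
  induction n, h using Nat.le_induction with
  | base => simp
  | succ n hn ih => rw [Finset.sum_Ico_succ_top (by omega), ih]; ring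



/- Statement 15: for an ℓ-charge `s` of weight 0 and
`γ = Σ_{p=1}^{ℓ-1} (s_{p+1} - s_p)(ω_p - ω_0)`, one has `⟨γ, γ⟩ = Σ_{p=1}^{ℓ} s_p²`,
where `⟨ω_p, ω_q⟩ = min(p,q) - pq/ℓ`. -/

theorem statement_15
    (ℓ : ℕ) (hℓ : 2 ≤ ℓ)
    (s : ℕ → ℤ) (hs : ∑ p ∈ Finset.Icc 1 ℓ, s p = 0)
    (V : Type*) [AddCommGroup V] [Module ℚ V]
    -- the bilinear form determined by `⟨ω_p, ω_q⟩ = min(p,q) - pq/ℓ` on the basis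
    (B : V →ₗ[ℚ] V →ₗ[ℚ] ℚ) (ω : Fin ℓ → V)
    (hB : ∀ p q : Fin ℓ, B (ω p) (ω q) =
      ((min (p : ℕ) (q : ℕ) : ℕ) : ℚ) - ((p : ℕ) : ℚ) * ((q : ℕ) : ℚ) / (ℓ : ℚ))
    -- `ωn` is `ω` reindexed by natural numbers `< ℓ`
    (ωn : ℕ → V) (hωn : ∀ p : ℕ, ∀ hp : p < ℓ, ωn p = ω ⟨p, hp⟩)
    -- `γ = Σ_{p=1}^{ℓ-1} (s_{p+1} - s_p) • (ω_p - ω_0)`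
    (γ : V)
    (hγ : γ = ∑ p ∈ Finset.Icc 1 (ℓ - 1), (((s (p + 1) - s p : ℤ)) : ℚ) • (ωn p - ωn 0)) :
    B γ γ = ∑ p ∈ Finset.Icc 1 ℓ, ((s p : ℚ)) ^ 2 := by
  classical
  set T := Finset.Icc 1 (ℓ - 1) with hT
  have hℓ0 : (ℓ : ℚ) ≠ 0 := by positivity
  set a : ℕ → ℚ := fun p => (s (p + 1) : ℚ) - (s p : ℚ) with ha
  have haeq : ∀ p, ((s (p + 1) - s p : ℤ) : ℚ) = a p := by intro p; rw [ha]; push_cast; ring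
  -- value of B on differences
  have hpair : ∀ p ∈ T, ∀ q ∈ T, B (ωn p - ωn 0) (ωn q - ωn 0)
      = ((min p q : ℕ) : ℚ) - (p : ℚ) * (q : ℚ) / (ℓ : ℚ) := by
    intro p hp q hq
    rw [hT, Finset.mem_Icc] at hp hq
    have hpℓ : p < ℓ := by omega
    have hqℓ : q < ℓ := by omega
    have h0 : 0 < ℓ := by omega
    rw [hωn p hpℓ, hωn q hqℓ, hωn 0 h0]
    simp only [map_sub, LinearMap.sub_apply, hB]
    simp
  -- step 1: expand bilinearity
  have step1 : B γ γ = ∑ p ∈ T, ∑ q ∈ T,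
      a p * a q * (((min p q : ℕ) : ℚ) - (p : ℚ) * (q : ℚ) / (ℓ : ℚ)) := by
    have e1 : B γ = ∑ p ∈ T, a p • B (ωn p - ωn 0) := by
      rw [hγ, map_sum]
      exact Finset.sum_congr rfl fun p _ => by rw [map_smul, haeq]
    have e2 : ∀ v : V, B v γ = ∑ q ∈ T, a q * B v (ωn q - ωn 0) := by
      intro v
      rw [hγ, map_sum]
      exact Finset.sum_congr rfl fun q _ => by rw [map_smul, smul_eq_mul, haeq]
    calc B γ γ = ∑ p ∈ T, a p * B (ωn p - ωn 0) γ := by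
          rw [e1, LinearMap.sum_apply]
          exact Finset.sum_congr rfl fun p _ => by
            rw [LinearMap.smul_apply, smul_eq_mul]
      _ = ∑ p ∈ T, a p * ∑ q ∈ T, a q * B (ωn p - ωn 0) (ωn q - ωn 0) := by
          exact Finset.sum_congr rfl fun p _ => by rw [e2]
      _ = ∑ p ∈ T, ∑ q ∈ T,
            a p * a q * (((min p q : ℕ) : ℚ) - (p : ℚ) * (q : ℚ) / (ℓ : ℚ)) := by
          refine Finset.sum_congr rfl fun p hp => ?_
          rw [Finset.mul_sum]
          refine Finset.sum_congr rfl fun q hq => ?_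
          rw [hpair p hp q hq]; ring
  -- indicator lemma
  have ind : ∀ m : ℕ, 1 ≤ m → m ≤ ℓ - 1 →
      ∑ k ∈ T, (if k ≤ m then (1 : ℚ) else 0) = (m : ℚ) := by
    intro m h1 h2
    rw [Finset.sum_boole]
    have : T.filter (fun k => k ≤ m) = Finset.Icc 1 m := by
      ext k; simp only [hT, Finset.mem_filter, Finset.mem_Icc]; omega
    rw [this, Nat.card_Icc]
    simp
  -- telescoping over the tail
  have hck : ∀ k ∈ T, ∑ p ∈ T, a p * (if k ≤ p then (1 : ℚ) else 0)
      = (s ℓ : ℚ) - (s k : ℚ) := by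
    intro k hk
    rw [hT, Finset.mem_Icc] at hk
    have : ∑ p ∈ T, a p * (if k ≤ p then (1 : ℚ) else 0)
        = ∑ p ∈ T.filter (fun p => k ≤ p), a p := by
      rw [Finset.sum_filter]
      refine Finset.sum_congr rfl fun p _ => ?_
      by_cases h : k ≤ p <;> simp [h]
    rw [this]
    have hfil : T.filter (fun p => k ≤ p) = Finset.Ico k ℓ := by
      ext p; simp only [hT, Finset.mem_filter, Finset.mem_Icc, Finset.mem_Ico]; omega
    rw [hfil, ha]
    exact tele_aux (fun n => (s n : ℚ)) k ℓ (by omega)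
  -- the sum of s over T
  have hSq : ∑ k ∈ T, (s k : ℚ) = -(s ℓ : ℚ) := by
    have hins : Finset.Icc 1 ℓ = insert ℓ T := by
      ext k; simp only [hT, Finset.mem_insert, Finset.mem_Icc]; omega
    have hsq : (∑ p ∈ Finset.Icc 1 ℓ, (s p : ℚ)) = 0 := by
      rw [← Int.cast_sum, hs]; simp
    rw [hins, Finset.sum_insert (by simp [hT]; omega)] at hsq
    linarith
  have hcardT : ((T.card : ℕ) : ℚ) = (ℓ : ℚ) - 1 := by
    rw [hT, Nat.card_Icc]
    have h1 : ℓ - 1 + 1 - 1 = ℓ - 1 := by omega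
    rw [h1, Nat.cast_sub (by omega), Nat.cast_one]
  -- linear moment
  have hA1 : ∑ p ∈ T, a p * (p : ℚ) = (ℓ : ℚ) * (s ℓ : ℚ) := by
    have h1 : ∑ p ∈ T, a p * (p : ℚ)
        = ∑ p ∈ T, ∑ k ∈ T, a p * (if k ≤ p then (1 : ℚ) else 0) := by
      refine Finset.sum_congr rfl fun p hp => ?_
      rw [← Finset.mul_sum]
      rw [hT, Finset.mem_Icc] at hp
      rw [ind p hp.1 hp.2]
    rw [h1, Finset.sum_comm]
    rw [Finset.sum_congr rfl hck, Finset.sum_sub_distrib, hSq, Finset.sum_const,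
      nsmul_eq_mul, hcardT]
    ring
  -- the min double sum
  have hminsum : ∑ p ∈ T, ∑ q ∈ T, a p * a q * ((min p q : ℕ) : ℚ)
      = ∑ k ∈ T, ((s ℓ : ℚ) - (s k : ℚ)) ^ 2 := by
    have h1 : ∀ p ∈ T, ∀ q ∈ T, a p * a q * ((min p q : ℕ) : ℚ)
        = ∑ k ∈ T, (a p * (if k ≤ p then (1 : ℚ) else 0)) *
            (a q * (if k ≤ q then (1 : ℚ) else 0)) := by
      intro p hp q hq
      rw [hT, Finset.mem_Icc] at hp hq
      have hm : ((min p q : ℕ) : ℚ) = ∑ k ∈ T, (if k ≤ p then (1 : ℚ) else 0) *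
          (if k ≤ q then (1 : ℚ) else 0) := by
        have : ∀ k : ℕ, (if k ≤ p then (1 : ℚ) else 0) * (if k ≤ q then (1 : ℚ) else 0)
            = (if k ≤ min p q then (1 : ℚ) else 0) := by
          intro k
          by_cases h1 : k ≤ p <;> by_cases h2 : k ≤ q <;>
            simp [h1, h2, le_min_iff]
        rw [Finset.sum_congr rfl fun k _ => this k,
          ind (min p q) (by omega) (by omega)]
      rw [hm, Finset.mul_sum]
      refine Finset.sum_congr rfl fun k _ => by ring
    calc ∑ p ∈ T, ∑ q ∈ T, a p * a q * ((min p q : ℕ) : ℚ)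
        = ∑ p ∈ T, ∑ q ∈ T, ∑ k ∈ T, (a p * (if k ≤ p then (1 : ℚ) else 0)) *
            (a q * (if k ≤ q then (1 : ℚ) else 0)) := by
          exact Finset.sum_congr rfl fun p hp => Finset.sum_congr rfl fun q hq => h1 p hp q hq
      _ = ∑ p ∈ T, ∑ k ∈ T, ∑ q ∈ T, (a p * (if k ≤ p then (1 : ℚ) else 0)) *
            (a q * (if k ≤ q then (1 : ℚ) else 0)) :=
          Finset.sum_congr rfl fun p _ => Finset.sum_comm
      _ = ∑ k ∈ T, ∑ p ∈ T, ∑ q ∈ T, (a p * (if k ≤ p then (1 : ℚ) else 0)) *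
            (a q * (if k ≤ q then (1 : ℚ) else 0)) := Finset.sum_comm
      _ = ∑ k ∈ T, (∑ p ∈ T, a p * (if k ≤ p then (1 : ℚ) else 0)) *
            (∑ q ∈ T, a q * (if k ≤ q then (1 : ℚ) else 0)) := by
          refine Finset.sum_congr rfl fun k _ => ?_
          rw [Finset.sum_mul_sum]
      _ = ∑ k ∈ T, ((s ℓ : ℚ) - (s k : ℚ)) ^ 2 := by
          refine Finset.sum_congr rfl fun k hk => ?_
          rw [hck k hk]; ring
  -- the product double sum
  have hprod : ∑ p ∈ T, ∑ q ∈ T, a p * a q * ((p : ℚ) * (q : ℚ) / (ℓ : ℚ))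
      = (ℓ : ℚ) * (s ℓ : ℚ) ^ 2 := by
    have h1 : ∑ p ∈ T, ∑ q ∈ T, a p * a q * ((p : ℚ) * (q : ℚ) / (ℓ : ℚ))
        = (∑ p ∈ T, a p * (p : ℚ)) * (∑ q ∈ T, a q * (q : ℚ)) / (ℓ : ℚ) := by
      rw [Finset.sum_mul_sum, Finset.sum_div]
      refine Finset.sum_congr rfl fun p _ => ?_
      rw [Finset.sum_div]
      exact Finset.sum_congr rfl fun q _ => by ring
    rw [h1, hA1]
    field_simp
  -- assemble
  rw [step1]
  have hsplit : ∑ p ∈ T, ∑ q ∈ T,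
      a p * a q * (((min p q : ℕ) : ℚ) - (p : ℚ) * (q : ℚ) / (ℓ : ℚ))
      = (∑ p ∈ T, ∑ q ∈ T, a p * a q * ((min p q : ℕ) : ℚ))
        - ∑ p ∈ T, ∑ q ∈ T, a p * a q * ((p : ℚ) * (q : ℚ) / (ℓ : ℚ)) := by
    rw [← Finset.sum_sub_distrib]
    refine Finset.sum_congr rfl fun p _ => ?_
    rw [← Finset.sum_sub_distrib]
    exact Finset.sum_congr rfl fun q _ => by ring
  rw [hsplit, hminsum, hprod]
  have hexp : ∑ k ∈ T, ((s ℓ : ℚ) - (s k : ℚ)) ^ 2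
      = T.card * (s ℓ : ℚ) ^ 2 - 2 * (s ℓ : ℚ) * (∑ k ∈ T, (s k : ℚ))
        + ∑ k ∈ T, (s k : ℚ) ^ 2 := by
    calc ∑ k ∈ T, ((s ℓ : ℚ) - (s k : ℚ)) ^ 2
        = ∑ k ∈ T, ((s ℓ : ℚ) ^ 2 - 2 * (s ℓ : ℚ) * (s k : ℚ) + (s k : ℚ) ^ 2) :=
          Finset.sum_congr rfl fun k _ => by ring
      _ = (∑ _k ∈ T, (s ℓ : ℚ) ^ 2) - 2 * (s ℓ : ℚ) * (∑ k ∈ T, (s k : ℚ))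
            + ∑ k ∈ T, (s k : ℚ) ^ 2 := by
          rw [Finset.sum_add_distrib, Finset.sum_sub_distrib, Finset.mul_sum]
      _ = T.card * (s ℓ : ℚ) ^ 2 - 2 * (s ℓ : ℚ) * (∑ k ∈ T, (s k : ℚ))
            + ∑ k ∈ T, (s k : ℚ) ^ 2 := by
          rw [Finset.sum_const, nsmul_eq_mul]
  rw [hexp, hSq, hcardT]
  have hins : Finset.Icc 1 ℓ = insert ℓ T := by
    ext k; simp only [hT, Finset.mem_insert, Finset.mem_Icc]; omega
  rw [hins, Finset.sum_insert (by simp [hT]; omega)]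
  ring
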